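/- arXiv:1010.5223 — 3 statements merged into one kernel-verified Lean document; each statement's English description precedes it below -/
import Mathlib

section
/- Suppose y has likelihood N(y; β, σ²) with σ > 0, and β has a prior probability density g on ℝ such that ∫_ℝ |β| N(y; β, σ²) g(β) dβ < ∞ for every y ∈ ℝ. Then the marginal m(y) = ∫_ℝ N(y; β, σ²) g(β) dβ is differentiable in y, and at every y with m(y) > 0 the posterior mean satisfies E(β | y) := m(y)^{−1} ∫_ℝ β N(y; β, σ²) g(β) dβ = y + σ² (d/dy) log m(y). -/
open MeasureTheory Set

/-- The normal density with mean `μ` and variance `v`. -/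
noncomputable def normPdf (y μ v : ℝ) : ℝ :=
  (2 * Real.pi * v) ^ (-(1 : ℝ) / 2) * Real.exp (-((y - μ) ^ 2) / (2 * v))

/-- The marginal `m(y) = ∫ N(y; β, σ²) g(β) dβ`. -/
noncomputable def marg (σ : ℝ) (g : ℝ → ℝ) (y : ℝ) : ℝ :=
  ∫ β : ℝ, normPdf y β (σ ^ 2) * g β

lemma normPdf_nonneg (y β v : ℝ) (hv : 0 < v) : 0 ≤ normPdf y β v := by
  unfold normPdf
  positivity

lemma normPdf_le (y β v : ℝ) (hv : 0 < v) :
    normPdf y β v ≤ (2 * Real.pi * v) ^ (-(1 : ℝ) / 2) := by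
  unfold normPdf
  have h1 : Real.exp (-((y - β) ^ 2) / (2 * v)) ≤ 1 := by
    apply Real.exp_le_one_iff.mpr
    have h2 : 0 ≤ (y - β)^2 := sq_nonneg _
    have h3 : 0 < 2 * v := by linarith
    apply div_nonpos_of_nonpos_of_nonneg <;> nlinarith
  have h2 : (0:ℝ) < (2 * Real.pi * v) ^ (-(1 : ℝ) / 2) := by
    apply Real.rpow_pos_of_pos
    have := Real.pi_pos
    positivity
  nlinarith

lemma measurable_normPdf_snd (y v : ℝ) : Measurable (fun β : ℝ => normPdf y β v) := by
  unfold normPdf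
  fun_prop

lemma hasDerivAt_normPdf (β v y : ℝ) (hv : 0 < v) :
    HasDerivAt (fun t => normPdf t β v) ((β - y) / v * normPdf y β v) y := by
  have h1 : HasDerivAt (fun t : ℝ => -((t - β) ^ 2) / (2 * v)) ((β - y) / v) y := by
    have hb : HasDerivAt (fun t : ℝ => -((t - β) ^ 2)) (-(2 * (y - β) ^ 1 * 1)) y :=
      (((hasDerivAt_id y).sub_const β).pow 2).neg
    have := hb.div_const (2 * v)
    rw [show (β - y) / v = -(2 * (y - β) ^ 1 * 1) / (2 * v) by ring]
    exact this
  have h2 := (h1.exp).const_mul ((2 * Real.pi * v) ^ (-(1 : ℝ) / 2))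
  have h3 : (β - y) / v * normPdf y β v = (2 * Real.pi * v) ^ (-(1 : ℝ) / 2) *
      (Real.exp (-((y - β) ^ 2) / (2 * v)) * ((β - y) / v)) := by
    unfold normPdf
    ring
  rw [h3]
  exact h2

/-- Gaussian domination: for `y` in the unit ball around `y₀`. -/
lemma normPdf_ball_le (σ y₀ y β : ℝ) (hσ : 0 < σ) (hy : |y - y₀| < 1) :
    normPdf y β (σ ^ 2) ≤
      Real.exp (2 / σ ^ 2) *
        (normPdf (y₀ + 1) β (σ ^ 2) + normPdf (y₀ - 1) β (σ ^ 2)) := by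
  have hv : (0:ℝ) < σ ^ 2 := by positivity
  have h2σ : (0:ℝ) < 2 * σ ^ 2 := by positivity
  have hc : (0:ℝ) < (2 * Real.pi * σ ^ 2) ^ (-(1 : ℝ) / 2) := by
    apply Real.rpow_pos_of_pos
    have := Real.pi_pos
    positivity
  have hy1 : y - y₀ < 1 := (abs_lt.mp hy).2
  have hy2 : -1 < y - y₀ := (abs_lt.mp hy).1
  rcases le_total y₀ β with hb | hb
  · have key : (y₀ + 1 - β) ^ 2 ≤ (y - β) ^ 2 + 4 := by
      nlinarith [sq_nonneg (y - β), sq_nonneg (y₀ + 1 - β), sq_nonneg (β - y₀)]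
    have hexp : Real.exp (-((y - β) ^ 2) / (2 * σ ^ 2)) ≤
        Real.exp (2 / σ ^ 2) * Real.exp (-((y₀ + 1 - β) ^ 2) / (2 * σ ^ 2)) := by
      rw [← Real.exp_add]
      apply Real.exp_le_exp.mpr
      have heq : 2 / σ ^ 2 + -((y₀ + 1 - β) ^ 2) / (2 * σ ^ 2) =
          (4 + -((y₀ + 1 - β) ^ 2)) / (2 * σ ^ 2) := by
        field_simp
        ring
      rw [heq, div_le_div_iff₀ h2σ h2σ]
      nlinarith
    have hpos : 0 ≤ normPdf (y₀ - 1) β (σ ^ 2) := normPdf_nonneg _ _ _ hv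
    unfold normPdf at *
    nlinarith [Real.exp_pos (2 / σ ^ 2)]
  · have key : (y₀ - 1 - β) ^ 2 ≤ (y - β) ^ 2 + 4 := by
      nlinarith [sq_nonneg (y - β), sq_nonneg (y₀ - 1 - β), sq_nonneg (y₀ - β)]
    have hexp : Real.exp (-((y - β) ^ 2) / (2 * σ ^ 2)) ≤
        Real.exp (2 / σ ^ 2) * Real.exp (-((y₀ - 1 - β) ^ 2) / (2 * σ ^ 2)) := by
      rw [← Real.exp_add]
      apply Real.exp_le_exp.mpr
      have heq : 2 / σ ^ 2 + -((y₀ - 1 - β) ^ 2) / (2 * σ ^ 2) =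
          (4 + -((y₀ - 1 - β) ^ 2)) / (2 * σ ^ 2) := by
        field_simp
        ring
      rw [heq, div_le_div_iff₀ h2σ h2σ]
      nlinarith
    have hpos : 0 ≤ normPdf (y₀ + 1) β (σ ^ 2) := normPdf_nonneg _ _ _ hv
    unfold normPdf at *
    nlinarith [Real.exp_pos (2 / σ ^ 2)]

theorem posterior_mean_score_representation
    (σ : ℝ) (hσ : 0 < σ)
    (g : ℝ → ℝ) (hg_meas : Measurable g) (hg_nonneg : ∀ β : ℝ, 0 ≤ g β)
    (hg_prob : ∫ β : ℝ, g β = 1)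
    (hint : ∀ y : ℝ, Integrable (fun β : ℝ => |β| * (normPdf y β (σ ^ 2) * g β))) :
    Differentiable ℝ (marg σ g) ∧
      ∀ y : ℝ, 0 < marg σ g y →
        (∫ β : ℝ, β * (normPdf y β (σ ^ 2) * g β)) / marg σ g y =
          y + σ ^ 2 * deriv (fun t : ℝ => Real.log (marg σ g t)) y := by
  have hv : (0:ℝ) < σ ^ 2 := by positivity
  have hg_int : Integrable g := by
    by_contra h
    rw [integral_undef h] at hg_prob
    exact one_ne_zero hg_prob.symm
  have hNg_m : ∀ y : ℝ, Measurable (fun β => normPdf y β (σ ^ 2) * g β) := fun y =>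
    (measurable_normPdf_snd y (σ ^ 2)).mul hg_meas
  have hNg_int : ∀ y : ℝ, Integrable (fun β => normPdf y β (σ ^ 2) * g β) := by
    intro y
    refine (hg_int.const_mul ((2 * Real.pi * σ ^ 2) ^ (-(1 : ℝ) / 2))).mono'
      (hNg_m y).aestronglyMeasurable ?_
    filter_upwards with β
    rw [Real.norm_eq_abs, abs_of_nonneg (mul_nonneg (normPdf_nonneg _ _ _ hv) (hg_nonneg β))]
    exact mul_le_mul_of_nonneg_right (normPdf_le _ _ _ hv) (hg_nonneg β)
  have hbNg_int : ∀ y : ℝ, Integrable (fun β : ℝ => β * (normPdf y β (σ ^ 2) * g β)) := by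
    intro y
    refine (hint y).mono' (measurable_id.mul (hNg_m y)).aestronglyMeasurable ?_
    filter_upwards with β
    rw [Real.norm_eq_abs, abs_mul,
      abs_of_nonneg (mul_nonneg (normPdf_nonneg _ _ _ hv) (hg_nonneg β))]
  -- derivative of the marginal
  have hderiv : ∀ y₀ : ℝ, HasDerivAt (marg σ g)
      (∫ β : ℝ, (β - y₀) / σ ^ 2 * (normPdf y₀ β (σ ^ 2) * g β)) y₀ := by
    intro y₀
    have hFmeas : ∀ᶠ y in nhds y₀,
        AEStronglyMeasurable (fun β => normPdf y β (σ ^ 2) * g β) (volume : Measure ℝ) :=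
      Filter.Eventually.of_forall fun y => (hNg_m y).aestronglyMeasurable
    have hF'meas : AEStronglyMeasurable
        (fun β : ℝ => (β - y₀) / σ ^ 2 * (normPdf y₀ β (σ ^ 2) * g β)) (volume : Measure ℝ) :=
      (((measurable_id.sub measurable_const).div_const _).mul (hNg_m y₀)).aestronglyMeasurable
    have hbint : Integrable (fun β : ℝ =>
        Real.exp (2 / σ ^ 2) / σ ^ 2 * ((|β| + (|y₀| + 1)) *
          ((normPdf (y₀ + 1) β (σ ^ 2) + normPdf (y₀ - 1) β (σ ^ 2)) * g β))) := by
      have e1 : Integrable (fun β : ℝ => |β| * (normPdf (y₀ + 1) β (σ ^ 2) * g β)) := hint _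
      have e2 : Integrable (fun β : ℝ => |β| * (normPdf (y₀ - 1) β (σ ^ 2) * g β)) := hint _
      have e3 : Integrable (fun β : ℝ => normPdf (y₀ + 1) β (σ ^ 2) * g β) := hNg_int _
      have e4 : Integrable (fun β : ℝ => normPdf (y₀ - 1) β (σ ^ 2) * g β) := hNg_int _
      have h := (((e1.add e2).add ((e3.add e4).const_mul (|y₀| + 1))).const_mul
        (Real.exp (2 / σ ^ 2) / σ ^ 2))
      refine h.congr (Filter.Eventually.of_forall fun β => ?_)
      simp only [Pi.add_apply]
      ring
    have hbd : ∀ᵐ β : ℝ, ∀ y ∈ Metric.ball y₀ (1:ℝ),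
        ‖(β - y) / σ ^ 2 * (normPdf y β (σ ^ 2) * g β)‖ ≤
          Real.exp (2 / σ ^ 2) / σ ^ 2 * ((|β| + (|y₀| + 1)) *
            ((normPdf (y₀ + 1) β (σ ^ 2) + normPdf (y₀ - 1) β (σ ^ 2)) * g β)) := by
      filter_upwards with β y hy
      rw [Metric.mem_ball, Real.dist_eq] at hy
      have h1 : normPdf y β (σ ^ 2) ≤ Real.exp (2 / σ ^ 2) *
          (normPdf (y₀ + 1) β (σ ^ 2) + normPdf (y₀ - 1) β (σ ^ 2)) :=
        normPdf_ball_le σ y₀ y β hσ hy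
      have h3 : |β - y| ≤ |β| + |y| := by
        calc |β - y| = |β + -y| := by ring_nf
          _ ≤ |β| + |-y| := abs_add_le _ _
          _ = |β| + |y| := by rw [abs_neg]
      have h4 : |y| ≤ |y - y₀| + |y₀| := by
        calc |y| = |(y - y₀) + y₀| := by ring_nf
          _ ≤ |y - y₀| + |y₀| := abs_add_le _ _
      have h2 : |β - y| ≤ |β| + (|y₀| + 1) := by linarith
      have hgb := hg_nonneg β
      have hN1 := normPdf_nonneg (y₀ + 1) β (σ ^ 2) hv
      have hN2 := normPdf_nonneg (y₀ - 1) β (σ ^ 2) hv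
      have hNy := normPdf_nonneg y β (σ ^ 2) hv
      have hE : (0:ℝ) < Real.exp (2 / σ ^ 2) := Real.exp_pos _
      rw [Real.norm_eq_abs, abs_mul, abs_div, abs_of_pos hv,
        abs_of_nonneg (mul_nonneg hNy hgb)]
      calc |β - y| / σ ^ 2 * (normPdf y β (σ ^ 2) * g β)
          ≤ (|β| + (|y₀| + 1)) / σ ^ 2 * (normPdf y β (σ ^ 2) * g β) := by
            apply mul_le_mul_of_nonneg_right _ (mul_nonneg hNy hgb)
            gcongr
        _ ≤ (|β| + (|y₀| + 1)) / σ ^ 2 * ((Real.exp (2 / σ ^ 2) *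
              (normPdf (y₀ + 1) β (σ ^ 2) + normPdf (y₀ - 1) β (σ ^ 2))) * g β) := by
            apply mul_le_mul_of_nonneg_left _ (by positivity)
            exact mul_le_mul_of_nonneg_right h1 hgb
        _ = Real.exp (2 / σ ^ 2) / σ ^ 2 * ((|β| + (|y₀| + 1)) *
              ((normPdf (y₀ + 1) β (σ ^ 2) + normPdf (y₀ - 1) β (σ ^ 2)) * g β)) := by ring
    have hdf : ∀ᵐ β : ℝ, ∀ y ∈ Metric.ball y₀ (1:ℝ),
        HasDerivAt (fun t => normPdf t β (σ ^ 2) * g β)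
          ((β - y) / σ ^ 2 * (normPdf y β (σ ^ 2) * g β)) y := by
      filter_upwards with β y _
      have := (hasDerivAt_normPdf β (σ ^ 2) y hv).mul_const (g β)
      rw [show (β - y) / σ ^ 2 * (normPdf y β (σ ^ 2) * g β) =
        (β - y) / σ ^ 2 * normPdf y β (σ ^ 2) * g β by ring]
      exact this
    have h := hasDerivAt_integral_of_dominated_loc_of_deriv_le (μ := volume) (Metric.ball_mem_nhds y₀ one_pos)
      hFmeas (hNg_int y₀) hF'meas hbd hbint hdf
    exact h.2
  refine ⟨fun y => (hderiv y).differentiableAt, ?_⟩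
  intro y hm
  have hm' : marg σ g y ≠ 0 := ne_of_gt hm
  have hlog : HasDerivAt (fun t : ℝ => Real.log (marg σ g t))
      ((∫ β : ℝ, (β - y) / σ ^ 2 * (normPdf y β (σ ^ 2) * g β)) / marg σ g y) y :=
    (hderiv y).log hm'
  rw [hlog.deriv]
  have hsplit : (∫ β : ℝ, (β - y) / σ ^ 2 * (normPdf y β (σ ^ 2) * g β)) =
      (σ ^ 2)⁻¹ * ((∫ β : ℝ, β * (normPdf y β (σ ^ 2) * g β)) - y * marg σ g y) := by
    rw [marg, ← integral_const_mul, mul_sub, ← integral_const_mul, ← integral_const_mul,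
      ← integral_sub]
    · congr 1
      ext β
      field_simp
    · exact (hbNg_int y).const_mul _
    · exact ((hNg_int y).const_mul y).const_mul _
  rw [hsplit]
  field_simp
  ring
end

section
/- For all a, b, τ > 0 with |1 − 1/τ²| < 1 and every s ∈ ℝ, the normalizing constant of the hypergeometric-beta density satisfies C(a,b,τ,s) = e^{−s} B(a,b) Φ₁(b, 1; a+b; s, 1 − 1/τ²). -/
open MeasureTheory Set

/-- The unnormalized hypergeometric-beta kernel
`κ^{a−1} (1−κ)^{b−1} {1/τ² + (1 − 1/τ²)κ}^{−1} e^{−sκ}`. -/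
noncomputable def hbKer (a b τ s κ : ℝ) : ℝ :=
  κ ^ (a - 1) * (1 - κ) ^ (b - 1) * (1 / τ ^ 2 + (1 - 1 / τ ^ 2) * κ)⁻¹ *
    Real.exp (-(s * κ))

/-- The normalizing constant `C(a,b,τ,s)`. -/
noncomputable def hbC (a b τ s : ℝ) : ℝ :=
  ∫ κ in Set.Ioo (0 : ℝ) 1, hbKer a b τ s κ

/-- The hypergeometric-beta density `π_{a,b,τ,s}` on `(0,1)`. -/
noncomputable def hbPdf (a b τ s κ : ℝ) : ℝ :=
  (hbC a b τ s)⁻¹ * hbKer a b τ s κ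

/-- The rising factorial `(q)_k = q (q+1) ⋯ (q+k−1)`. -/
noncomputable def risingFac (q : ℝ) (k : ℕ) : ℝ :=
  ∏ i ∈ Finset.range k, (q + (i : ℝ))

/-- The degenerate (Humbert) hypergeometric function of two variables
`Φ₁(α, β; γ; x, y) = Σ_{m,n≥0} [(α)_{m+n} (β)_n / ((γ)_{m+n} m! n!)] x^m y^n`. -/
noncomputable def Phi1 (α β γ x y : ℝ) : ℝ :=
  ∑' p : ℕ × ℕ,
    risingFac α (p.1 + p.2) * risingFac β p.2 /
      (risingFac γ (p.1 + p.2) * (Nat.factorial p.1) * (Nat.factorial p.2)) *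
      x ^ p.1 * y ^ p.2

/-- The Euler beta function `B(a,b) = Γ(a)Γ(b)/Γ(a+b)`. -/
noncomputable def betaFn (a b : ℝ) : ℝ :=
  Real.Gamma a * Real.Gamma b / Real.Gamma (a + b)

lemma risingFac_succ (q : ℝ) (n : ℕ) :
    risingFac q (n + 1) = risingFac q n * (q + n) := Finset.prod_range_succ _ _

lemma risingFac_pos {q : ℝ} (hq : 0 < q) (n : ℕ) : 0 < risingFac q n :=
  Finset.prod_pos fun i _ => by positivity

lemma risingFac_one (n : ℕ) : risingFac 1 n = n.factorial := by
  induction n with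
  | zero => simp [risingFac]
  | succ n ih => rw [risingFac_succ, ih, Nat.factorial_succ]; push_cast; ring

lemma Gamma_add_nat {x : ℝ} (hx : 0 < x) (n : ℕ) :
    Real.Gamma (x + n) = risingFac x n * Real.Gamma x := by
  induction n with
  | zero => simp [risingFac]
  | succ n ih =>
    have h : x + ((n : ℕ) + 1 : ℕ) = (x + n) + 1 := by push_cast; ring
    have hpos : (0:ℝ) < x + n := by positivity
    rw [h, Real.Gamma_add_one hpos.ne', ih, risingFac_succ]; ring

lemma betaFn_pos {a b : ℝ} (ha : 0 < a) (hb : 0 < b) : 0 < betaFn a b := by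
  unfold betaFn
  have := Real.Gamma_pos_of_pos ha
  have := Real.Gamma_pos_of_pos hb
  have := Real.Gamma_pos_of_pos (show (0:ℝ) < a + b by positivity)
  positivity

lemma betaFn_add_nat {a b : ℝ} (ha : 0 < a) (hb : 0 < b) (n : ℕ) :
    betaFn a (b + n) = betaFn a b * (risingFac b n / risingFac (a + b) n) := by
  unfold betaFn
  have h : a + (b + n) = (a + b) + n := by ring
  rw [Gamma_add_nat hb n, h, Gamma_add_nat (show (0:ℝ) < a + b by positivity) n]
  have h1 := (Real.Gamma_pos_of_pos (show (0:ℝ) < a + b by positivity)).ne'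
  have h2 := (risingFac_pos (show (0:ℝ) < a + b by positivity) n).ne'
  field_simp

lemma betaFn_add_nat_le {a b : ℝ} (ha : 0 < a) (hb : 0 < b) (n : ℕ) :
    betaFn a (b + n) ≤ betaFn a b := by
  rw [betaFn_add_nat ha hb n]
  have h1 : risingFac b n ≤ risingFac (a + b) n := by
    refine Finset.prod_le_prod (fun i _ => by positivity) (fun i _ => by linarith)
  have h2 := risingFac_pos (show (0:ℝ) < a + b by positivity) n
  have h3 := betaFn_pos ha hb
  nlinarith [div_le_one_of_le₀ h1 h2.le]

lemma integrableOn_betaKer {a c : ℝ} (ha : 0 < a) (hc : 0 < c) :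
    IntegrableOn (fun x : ℝ => x ^ (a - 1) * (1 - x) ^ (c - 1)) (Ioo 0 1) := by
  have h := Complex.betaIntegral_convergent (u := (a:ℂ)) (v := (c:ℂ)) (by simpa) (by simpa)
  rw [intervalIntegrable_iff_integrableOn_Ioc_of_le zero_le_one] at h
  have h2 : IntegrableOn (fun x : ℝ => ((x ^ (a - 1) * (1 - x) ^ (c - 1) : ℝ) : ℂ))
      (Ioc 0 1) := by
    refine h.congr_fun (fun x hx => ?_) measurableSet_Ioc
    rw [Complex.ofReal_mul, Complex.ofReal_cpow hx.1.le, Complex.ofReal_cpow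
      (by linarith [hx.2] : (0:ℝ) ≤ 1 - x)]
    push_cast
    ring_nf
  have h3 := h2.re
  have h4 : IntegrableOn (fun x : ℝ => x ^ (a - 1) * (1 - x) ^ (c - 1)) (Ioc 0 1) :=
    h3.congr (Filter.Eventually.of_forall fun x => by simp)
  exact h4.mono_set Ioo_subset_Ioc_self

lemma integral_betaKer {a c : ℝ} (ha : 0 < a) (hc : 0 < c) :
    ∫ x in Ioo (0:ℝ) 1, x ^ (a - 1) * (1 - x) ^ (c - 1) = betaFn a c := by
  have h := Complex.Gamma_mul_Gamma_eq_betaIntegral (s := (a:ℂ)) (t := (c:ℂ)) (by simpa) (by simpa)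
  have hβ : Complex.betaIntegral a c =
      ((∫ x in Ioo (0:ℝ) 1, x ^ (a - 1) * (1 - x) ^ (c - 1) : ℝ) : ℂ) := by
    rw [Complex.betaIntegral, intervalIntegral.integral_of_le zero_le_one,
      integral_Ioc_eq_integral_Ioo]
    rw [show ((∫ x in Ioo (0:ℝ) 1, x ^ (a - 1) * (1 - x) ^ (c - 1) : ℝ) : ℂ)
        = ∫ x in Ioo (0:ℝ) 1, ((x ^ (a - 1) * (1 - x) ^ (c - 1) : ℝ) : ℂ) from
      (integral_ofReal (𝕜 := ℂ)).symm]
    refine setIntegral_congr_fun measurableSet_Ioo fun x hx => ?_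
    rw [Complex.ofReal_mul, Complex.ofReal_cpow hx.1.le, Complex.ofReal_cpow
      (by linarith [hx.2] : (0:ℝ) ≤ 1 - x)]
    push_cast
    ring_nf
  rw [hβ, ← Complex.ofReal_add, Complex.Gamma_ofReal, Complex.Gamma_ofReal,
    Complex.Gamma_ofReal, ← Complex.ofReal_mul, ← Complex.ofReal_mul] at h
  have h' := Complex.ofReal_inj.mp h
  unfold betaFn
  rw [h']
  have := (Real.Gamma_pos_of_pos (show (0:ℝ) < a + c by positivity)).ne'
  field_simp

theorem hb_normalizing_constant (a b τ s : ℝ) (ha : 0 < a) (hb : 0 < b) (hτ : 0 < τ)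
    (hτ' : |1 - 1 / τ ^ 2| < 1) :
    hbC a b τ s = Real.exp (-s) * betaFn a b * Phi1 b 1 (a + b) s (1 - 1 / τ ^ 2) := by
  set y : ℝ := 1 - 1 / τ ^ 2 with hy_def
  have hy : |y| < 1 := hτ'
  have hpos : ∀ k : ℕ, (0:ℝ) < b + k := fun k => by positivity
  set F : ℕ × ℕ → ℝ → ℝ := fun p κ =>
    (s ^ p.1 / (p.1.factorial : ℝ) * y ^ p.2) *
      (κ ^ (a - 1) * (1 - κ) ^ ((b + ((p.1 + p.2 : ℕ) : ℝ)) - 1)) with hF_def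
  -- pointwise expansion of the kernel
  have hker : ∀ κ ∈ Ioo (0:ℝ) 1, hbKer a b τ s κ = Real.exp (-s) * ∑' p : ℕ × ℕ, F p κ := by
    rintro κ ⟨h0, h1⟩
    have h1κ : (0:ℝ) < 1 - κ := by linarith
    have hr : |y| * |1 - κ| < 1 := by
      rw [abs_of_pos h1κ]
      nlinarith [abs_nonneg y]
    have hden : (1 / τ ^ 2 + (1 - 1 / τ ^ 2) * κ) = 1 - y * (1 - κ) := by
      rw [hy_def]; ring
    have hgeom : (1 - y * (1 - κ))⁻¹ = ∑' n : ℕ, (y * (1 - κ)) ^ n :=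
      (tsum_geometric_of_norm_lt_one (by rw [Real.norm_eq_abs, abs_mul]; exact hr)).symm
    have hexp : Real.exp (-(s * κ)) =
        Real.exp (-s) * ∑' m : ℕ, (s * (1 - κ)) ^ m / m.factorial := by
      rw [show -(s * κ) = -s + s * (1 - κ) by ring, Real.exp_add]
      congr 1
      rw [Real.exp_eq_exp_ℝ, NormedSpace.exp_eq_tsum_div]
    have hs1 : Summable (fun m : ℕ => ‖(s * (1 - κ)) ^ m / (m.factorial : ℝ)‖) := by
      simpa [Real.norm_eq_abs, abs_div, abs_pow, abs_mul, Nat.abs_cast] using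
        Real.summable_pow_div_factorial |s * (1 - κ)|
    have hs2 : Summable (fun n : ℕ => ‖(y * (1 - κ)) ^ n‖) := by
      simpa [Real.norm_eq_abs, abs_pow, abs_mul] using
        summable_geometric_of_lt_one (abs_nonneg (y * (1 - κ)))
          (by rw [abs_mul]; exact hr)
    have hprod : (∑' m : ℕ, (s * (1 - κ)) ^ m / (m.factorial : ℝ)) *
        (∑' n : ℕ, (y * (1 - κ)) ^ n) =
        ∑' p : ℕ × ℕ, ((s * (1 - κ)) ^ p.1 / (p.1.factorial : ℝ)) * (y * (1 - κ)) ^ p.2 :=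
      tsum_mul_tsum_of_summable_norm hs1 hs2
    have hterm : ∀ p : ℕ × ℕ, (κ ^ (a - 1) * (1 - κ) ^ (b - 1)) *
        (((s * (1 - κ)) ^ p.1 / (p.1.factorial : ℝ)) * (y * (1 - κ)) ^ p.2) = F p κ := by
      intro p
      have hrpow : (1 - κ) ^ ((b + ((p.1 + p.2 : ℕ) : ℝ)) - 1) =
          (1 - κ) ^ (b - 1) * (1 - κ) ^ (p.1 + p.2) := by
        rw [show (b + ((p.1 + p.2 : ℕ) : ℝ)) - 1 = (b - 1) + ((p.1 + p.2 : ℕ) : ℝ) by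
          push_cast; ring, Real.rpow_add h1κ, Real.rpow_natCast]
      have hfac : ((p.1.factorial : ℝ)) ≠ 0 := Nat.cast_ne_zero.mpr p.1.factorial_ne_zero
      rw [hF_def]
      simp only
      rw [hrpow, pow_add, mul_pow, mul_pow]
      field_simp
    calc hbKer a b τ s κ
        = κ ^ (a - 1) * (1 - κ) ^ (b - 1) * (1 - y * (1 - κ))⁻¹ *
            (Real.exp (-s) * ∑' m : ℕ, (s * (1 - κ)) ^ m / m.factorial) := by
          rw [hbKer, hden, hexp]
      _ = Real.exp (-s) * ((κ ^ (a - 1) * (1 - κ) ^ (b - 1)) *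
            ((∑' m : ℕ, (s * (1 - κ)) ^ m / (m.factorial : ℝ)) *
             (∑' n : ℕ, (y * (1 - κ)) ^ n))) := by rw [hgeom]; ring
      _ = Real.exp (-s) * ∑' p : ℕ × ℕ, F p κ := by
          rw [hprod, ← tsum_mul_left]
          exact congrArg _ (tsum_congr hterm)
  -- measurability
  have hmeasF : ∀ p : ℕ × ℕ, AEStronglyMeasurable (F p) (volume.restrict (Ioo 0 1)) := by
    intro p
    have hcont : ContinuousOn
        (fun κ : ℝ => κ ^ (a - 1) * (1 - κ) ^ ((b + ((p.1 + p.2 : ℕ) : ℝ)) - 1))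
        (Ioo 0 1) := by
      refine ContinuousOn.mul ?_ ?_
      · exact continuousOn_id.rpow_const fun x hx => Or.inl (ne_of_gt hx.1)
      · exact (continuousOn_const.sub continuousOn_id).rpow_const
          fun x hx => Or.inl (sub_ne_zero.mpr (ne_of_gt hx.2))
    exact (hcont.aestronglyMeasurable measurableSet_Ioo).const_mul _
  -- integrability
  have hintF : ∀ p : ℕ × ℕ, IntegrableOn (F p) (Ioo 0 1) := fun p =>
    (integrableOn_betaKer ha (hpos (p.1 + p.2))).const_mul _
  -- integral of each term
  have hintegralF : ∀ p : ℕ × ℕ, ∫ κ in Ioo (0:ℝ) 1, F p κ =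
      (s ^ p.1 / (p.1.factorial : ℝ) * y ^ p.2) * betaFn a (b + (p.1 + p.2 : ℕ)) := by
    intro p
    rw [hF_def]
    simp only
    rw [integral_const_mul, integral_betaKer ha (hpos (p.1 + p.2))]
  -- lintegral of norms
  have hlint : ∀ p : ℕ × ℕ, (∫⁻ κ in Ioo (0:ℝ) 1, ‖F p κ‖₊) =
      ENNReal.ofReal (|s| ^ p.1 / (p.1.factorial : ℝ) * |y| ^ p.2 *
        betaFn a (b + (p.1 + p.2 : ℕ))) := by
    intro p
    simp only [← enorm_eq_nnnorm]
    rw [← ofReal_integral_norm_eq_lintegral_enorm (hintF p)]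
    congr 1
    have heq : ∀ κ ∈ Ioo (0:ℝ) 1, ‖F p κ‖ =
        (|s| ^ p.1 / (p.1.factorial : ℝ) * |y| ^ p.2) *
          (κ ^ (a - 1) * (1 - κ) ^ ((b + ((p.1 + p.2 : ℕ) : ℝ)) - 1)) := by
      rintro κ ⟨h0, h1⟩
      have h1κ : (0:ℝ) < 1 - κ := by linarith
      rw [hF_def]
      simp only [Real.norm_eq_abs, abs_mul, abs_div, abs_pow, Nat.abs_cast,
        abs_of_nonneg (Real.rpow_nonneg h0.le _),
        abs_of_nonneg (Real.rpow_nonneg h1κ.le _)]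
    rw [setIntegral_congr_fun measurableSet_Ioo heq, integral_const_mul,
      integral_betaKer ha (hpos (p.1 + p.2))]
  -- summability of the bound
  have hsum : Summable (fun p : ℕ × ℕ => |s| ^ p.1 / (p.1.factorial : ℝ) * |y| ^ p.2 *
      betaFn a (b + (p.1 + p.2 : ℕ))) := by
    have hS : Summable (fun p : ℕ × ℕ =>
        (|s| ^ p.1 / (p.1.factorial : ℝ) * |y| ^ p.2) * betaFn a b) :=
      (Summable.mul_of_nonneg (Real.summable_pow_div_factorial |s|)
        (summable_geometric_of_lt_one (abs_nonneg y) hy)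
        (fun m => by positivity) (fun n => by positivity)).mul_right _
    refine Summable.of_nonneg_of_le (fun p => ?_) (fun p => ?_) hS
    · have := betaFn_pos ha (hpos (p.1 + p.2))
      positivity
    · exact mul_le_mul_of_nonneg_left (betaFn_add_nat_le ha hb _) (by positivity)
  have hne : (∑' p : ℕ × ℕ, ∫⁻ κ in Ioo (0:ℝ) 1, ‖F p κ‖₊) ≠ ⊤ := by
    simp_rw [hlint]
    rw [← ENNReal.ofReal_tsum_of_nonneg (fun p => by
      have := betaFn_pos ha (hpos (p.1 + p.2)); positivity) hsum]
    exact ENNReal.ofReal_ne_top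
  -- main computation
  calc hbC a b τ s
      = ∫ κ in Ioo (0:ℝ) 1, Real.exp (-s) * ∑' p : ℕ × ℕ, F p κ :=
        setIntegral_congr_fun measurableSet_Ioo hker
    _ = Real.exp (-s) * ∫ κ in Ioo (0:ℝ) 1, ∑' p : ℕ × ℕ, F p κ := integral_const_mul _ _
    _ = Real.exp (-s) * ∑' p : ℕ × ℕ, ∫ κ in Ioo (0:ℝ) 1, F p κ := by
        rw [integral_tsum hmeasF hne]
    _ = Real.exp (-s) * ∑' p : ℕ × ℕ,
          (s ^ p.1 / (p.1.factorial : ℝ) * y ^ p.2) * betaFn a (b + (p.1 + p.2 : ℕ)) := by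
        exact congrArg _ (tsum_congr hintegralF)
    _ = Real.exp (-s) * betaFn a b * Phi1 b 1 (a + b) s y := by
        rw [Phi1, mul_assoc]
        congr 1
        rw [← tsum_mul_left]
        refine tsum_congr fun p => ?_
        rw [betaFn_add_nat ha hb, risingFac_one]
        have h1 := (risingFac_pos (show (0:ℝ) < a + b by positivity) (p.1 + p.2)).ne'
        have h2 : ((p.1.factorial : ℝ)) ≠ 0 := Nat.cast_ne_zero.mpr p.1.factorial_ne_zero
        have h3 : ((p.2.factorial : ℝ)) ≠ 0 := Nat.cast_ne_zero.mpr p.2.factorial_ne_zero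
        field_simp
end

section
/- Let a, b, τ > 0, s ∈ ℝ, σ > 0, and y ∈ ℝ. Define the joint density on ℝ × (0,1): f(β, κ) = N(y; β, σ²) N(β; 0, σ²(1/κ − 1)) π_{a,b,τ,s}(κ), and for any function h(β, κ) let E[h | y] = [∬ h f] / [∬ f]. Then the posterior variance Var(β | y) := E[β² | y] − (E[β | y])² satisfies the decomposition Var(β | y) = σ²(1 − E[κ | y]) + y² · Var(κ | y), where Var(κ | y) = E[κ² | y] − (E[κ | y])². -/
open MeasureTheory Set

/-- The joint density `f(β, κ) = N(y; β, σ²) N(β; 0, σ²(1/κ − 1)) π_{a,b,τ,s}(κ)`. -/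
noncomputable def jointF (a b τ s σ y β κ : ℝ) : ℝ :=
  normPdf y β (σ ^ 2) * normPdf β 0 (σ ^ 2 * (1 / κ - 1)) * hbPdf a b τ s κ

/-! ### Auxiliary material -/

open Real Filter

section GaussianMoments

lemma hbAux_exp_half_tendsto : Tendsto (fun x : ℝ => Real.exp (-(1/2) * x)) atTop (nhds 0) := by
  apply Real.tendsto_exp_atBot.comp
  have h : Tendsto (fun x : ℝ => (1/2 : ℝ) * x) atTop atTop :=
    (tendsto_id (α := ℝ)).const_mul_atTop (by norm_num)
  have h2 : Tendsto (fun x : ℝ => -((1/2:ℝ) * x)) atTop atBot := tendsto_neg_atBot_iff.mpr h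
  exact h2.congr (fun x => by ring)

lemma hbAux_tendsto_mul_exp_atTop {c : ℝ} (hc : 0 < c) :
    Tendsto (fun x : ℝ => x * Real.exp (-c * x ^ 2)) atTop (nhds 0) := by
  have h := (rpow_mul_exp_neg_mul_sq_isLittleO_exp_neg hc 1).tendsto_zero_of_tendsto
      hbAux_exp_half_tendsto
  refine h.congr' ?_
  filter_upwards [eventually_gt_atTop (0:ℝ)] with x hx
  rw [Real.rpow_one]

lemma hbAux_tendsto_mul_exp_atBot {c : ℝ} (hc : 0 < c) :
    Tendsto (fun x : ℝ => x * Real.exp (-c * x ^ 2)) atBot (nhds 0) := by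
  have h := ((hbAux_tendsto_mul_exp_atTop hc).neg).comp tendsto_neg_atBot_atTop
  simpa [Function.comp_def] using h

lemma hbAux_tendsto_exp_atTop {c : ℝ} (hc : 0 < c) :
    Tendsto (fun x : ℝ => Real.exp (-c * x ^ 2)) atTop (nhds 0) := by
  apply Real.tendsto_exp_atBot.comp
  have h : Tendsto (fun x : ℝ => x ^ 2) atTop atTop := tendsto_pow_atTop two_ne_zero
  have h2 : Tendsto (fun x : ℝ => -(c * x ^ 2)) atTop atBot :=
    tendsto_neg_atBot_iff.mpr (h.const_mul_atTop hc)
  exact h2.congr (fun x => by ring)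

lemma hbAux_tendsto_exp_atBot {c : ℝ} (hc : 0 < c) :
    Tendsto (fun x : ℝ => Real.exp (-c * x ^ 2)) atBot (nhds 0) := by
  have h := (hbAux_tendsto_exp_atTop hc).comp tendsto_neg_atBot_atTop
  simpa [Function.comp_def] using h

lemma hbAux_integral_x_exp {c : ℝ} (hc : 0 < c) :
    ∫ x : ℝ, x * Real.exp (-c * x ^ 2) = 0 := by
  have hd : ∀ x : ℝ, HasDerivAt (fun x : ℝ => -(2*c)⁻¹ * Real.exp (-c * x ^ 2))
      (x * Real.exp (-c * x ^ 2)) x := by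
    intro x
    have h1 : HasDerivAt (fun x : ℝ => -c * x ^ 2) (-c * (2 * x)) x := by
      simpa [mul_comm] using ((hasDerivAt_pow 2 x).const_mul (-c))
    have h2 := (h1.exp).const_mul (-(2*c)⁻¹)
    refine h2.congr_deriv ?_
    field_simp
  have h := integral_of_hasDerivAt_of_tendsto hd (integrable_mul_exp_neg_mul_sq hc)
      (((hbAux_tendsto_exp_atBot hc).const_mul (-(2*c)⁻¹)))
      (((hbAux_tendsto_exp_atTop hc).const_mul (-(2*c)⁻¹)))
  simpa using h

lemma hbAux_integrable_sq_exp {c : ℝ} (hc : 0 < c) :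
    Integrable (fun x : ℝ => x ^ 2 * Real.exp (-c * x ^ 2)) := by
  have := integrable_rpow_mul_exp_neg_mul_sq hc (by norm_num : (-1:ℝ) < 2)
  simpa [Real.rpow_two] using this

lemma hbAux_integral_sq_exp {c : ℝ} (hc : 0 < c) :
    ∫ x : ℝ, x ^ 2 * Real.exp (-c * x ^ 2) = (2*c)⁻¹ * Real.sqrt (Real.pi / c) := by
  have hd : ∀ x : ℝ, HasDerivAt (fun x : ℝ => -(2*c)⁻¹ * (x * Real.exp (-c * x ^ 2)))
      (x ^ 2 * Real.exp (-c * x ^ 2) - (2*c)⁻¹ * Real.exp (-c * x ^ 2)) x := by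
    intro x
    have h1 : HasDerivAt (fun x : ℝ => -c * x ^ 2) (-c * (2 * x)) x := by
      simpa [mul_comm] using ((hasDerivAt_pow 2 x).const_mul (-c))
    have h2 := ((hasDerivAt_id x).mul h1.exp).const_mul (-(2*c)⁻¹)
    refine h2.congr_deriv ?_
    field_simp
    simp only [id_eq]; ring
  have hint : Integrable (fun x : ℝ => x ^ 2 * Real.exp (-c * x ^ 2)
      - (2*c)⁻¹ * Real.exp (-c * x ^ 2)) :=
    (hbAux_integrable_sq_exp hc).sub ((integrable_exp_neg_mul_sq hc).const_mul _)
  have h := integral_of_hasDerivAt_of_tendsto hd hint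
      (((hbAux_tendsto_mul_exp_atBot hc).const_mul (-(2*c)⁻¹)))
      (((hbAux_tendsto_mul_exp_atTop hc).const_mul (-(2*c)⁻¹)))
  rw [integral_sub (hbAux_integrable_sq_exp hc)
      ((integrable_exp_neg_mul_sq hc).const_mul _), integral_const_mul, integral_gaussian] at h
  simp only [mul_zero, sub_zero] at h
  linarith [h]

lemma hbAux_integral_shift_exp {c m : ℝ} (hc : 0 < c) :
    ∫ β : ℝ, Real.exp (-c * (β - m) ^ 2) = Real.sqrt (Real.pi / c) := by
  have h := integral_sub_right_eq_self (μ := volume) (fun x : ℝ => Real.exp (-c * x ^ 2)) m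
  rw [h, integral_gaussian]

lemma hbAux_integral_shift_mul_exp {c m : ℝ} (hc : 0 < c) :
    ∫ β : ℝ, β * Real.exp (-c * (β - m) ^ 2) = m * Real.sqrt (Real.pi / c) := by
  have h := integral_sub_right_eq_self (μ := volume)
    (fun x : ℝ => (x + m) * Real.exp (-c * x ^ 2)) m
  simp only [sub_add_cancel] at h
  rw [h]
  have hsplit : (fun x : ℝ => (x + m) * Real.exp (-c * x ^ 2))
      = fun x : ℝ => x * Real.exp (-c * x ^ 2) + m * Real.exp (-c * x ^ 2) := by
    funext x; ring
  rw [hsplit, integral_add (integrable_mul_exp_neg_mul_sq hc)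
      ((integrable_exp_neg_mul_sq hc).const_mul m), hbAux_integral_x_exp hc,
      integral_const_mul, integral_gaussian]
  ring

lemma hbAux_integral_shift_sq_mul_exp {c m : ℝ} (hc : 0 < c) :
    ∫ β : ℝ, β ^ 2 * Real.exp (-c * (β - m) ^ 2)
      = ((2*c)⁻¹ + m ^ 2) * Real.sqrt (Real.pi / c) := by
  have h := integral_sub_right_eq_self (μ := volume)
    (fun x : ℝ => (x + m) ^ 2 * Real.exp (-c * x ^ 2)) m
  simp only [sub_add_cancel] at h
  rw [h]
  have hsplit : (fun x : ℝ => (x + m) ^ 2 * Real.exp (-c * x ^ 2))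
      = fun x : ℝ => x ^ 2 * Real.exp (-c * x ^ 2)
        + ((2*m) * (x * Real.exp (-c * x ^ 2)) + m ^ 2 * Real.exp (-c * x ^ 2)) := by
    funext x; ring
  have hg : Integrable (fun x : ℝ => (2*m) * (x * Real.exp (-c * x ^ 2))
      + m ^ 2 * Real.exp (-c * x ^ 2)) := by
    exact ((integrable_mul_exp_neg_mul_sq hc).const_mul (2*m)).add
      ((integrable_exp_neg_mul_sq hc).const_mul (m^2))
  rw [hsplit, integral_add (hbAux_integrable_sq_exp hc) hg,
    integral_add ((integrable_mul_exp_neg_mul_sq hc).const_mul (2*m))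
      ((integrable_exp_neg_mul_sq hc).const_mul (m^2)),
    integral_const_mul, integral_const_mul, hbAux_integral_x_exp hc,
    hbAux_integral_sq_exp hc, integral_gaussian]
  ring

end GaussianMoments

section JointFactorization

lemma hbAux_rpow_neg_half_eq_sqrt_inv {x : ℝ} (hx : 0 ≤ x) :
    x ^ (-(1:ℝ)/2) = (Real.sqrt x)⁻¹ := by
  rw [show (-(1:ℝ)/2) = -(1/2 : ℝ) by norm_num, Real.rpow_neg hx, Real.sqrt_eq_rpow]

lemma hbAux_jointF_eq (a b τ s σ y : ℝ) (hσ : 0 < σ) {κ : ℝ} (h0 : 0 < κ) (h1 : κ < 1)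
    (β : ℝ) :
    jointF a b τ s σ y β κ =
      ((2*Real.pi*σ^2) ^ (-(1:ℝ)/2) * (2*Real.pi*(σ^2*(1/κ-1))) ^ (-(1:ℝ)/2)
        * Real.exp (-(κ*y^2)/(2*σ^2)) * hbPdf a b τ s κ)
      * Real.exp (-(2*(σ^2*(1-κ)))⁻¹ * (β - (1-κ)*y) ^ 2) := by
  have hκ0 : κ ≠ 0 := ne_of_gt h0
  have hκ1 : (1:ℝ) - κ ≠ 0 := by intro h; apply absurd h1; simp; nlinarith
  have hσ0 : σ ≠ 0 := ne_of_gt hσ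
  have hexp : Real.exp (-((y - β)^2) / (2*σ^2)) * Real.exp (-((β - 0)^2) / (2*(σ^2*(1/κ-1))))
      = Real.exp (-(κ*y^2)/(2*σ^2)) * Real.exp (-(2*(σ^2*(1-κ)))⁻¹ * (β-(1-κ)*y)^2) := by
    rw [← Real.exp_add, ← Real.exp_add]
    congr 1
    field_simp
    ring
  have h2 : jointF a b τ s σ y β κ
      = (2*Real.pi*σ^2) ^ (-(1:ℝ)/2) * (2*Real.pi*(σ^2*(1/κ-1))) ^ (-(1:ℝ)/2)
        * hbPdf a b τ s κ
        * (Real.exp (-((y - β)^2) / (2*σ^2)) * Real.exp (-((β - 0)^2) / (2*(σ^2*(1/κ-1))))) := by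
    unfold jointF normPdf
    ring
  rw [h2, hexp]
  ring

lemma hbAux_const_simp (σ : ℝ) (hσ : 0 < σ) {κ : ℝ} (h0 : 0 < κ) (h1 : κ < 1) :
    (2*Real.pi*σ^2) ^ (-(1:ℝ)/2) * (2*Real.pi*(σ^2*(1/κ-1))) ^ (-(1:ℝ)/2)
      * Real.sqrt (Real.pi / (2*(σ^2*(1-κ)))⁻¹)
    = Real.sqrt κ / Real.sqrt (2*Real.pi*σ^2) := by
  have hP : 0 < 2*Real.pi*σ^2 := by positivity
  have hu : 0 < 1-κ := by linarith
  have h2 : 2*Real.pi*(σ^2*(1/κ-1)) = (2*Real.pi*σ^2) * (1-κ) / κ := by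
    field_simp
  have h3 : Real.pi / (2*(σ^2*(1-κ)))⁻¹ = (2*Real.pi*σ^2)*(1-κ) := by
    rw [div_eq_mul_inv, inv_inv]; ring
  rw [h2, h3, hbAux_rpow_neg_half_eq_sqrt_inv hP.le,
    hbAux_rpow_neg_half_eq_sqrt_inv (by positivity : (0:ℝ) ≤ (2*Real.pi*σ^2) * (1-κ) / κ),
    Real.sqrt_div (by positivity) κ]
  have hs1 : Real.sqrt (2*Real.pi*σ^2) ≠ 0 := by positivity
  have hs2 : Real.sqrt ((2*Real.pi*σ^2)*(1-κ)) ≠ 0 := by positivity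
  field_simp

end JointFactorization

/-- The marginal (in `κ`) of the joint density, after integrating out `β`. -/
noncomputable def gAux (a b τ s σ y κ : ℝ) : ℝ :=
  hbPdf a b τ s κ * (Real.sqrt κ / Real.sqrt (2*Real.pi*σ^2)) * Real.exp (-(κ*y^2)/(2*σ^2))

lemma hbAux_inner_integrals (a b τ s σ y : ℝ) (hσ : 0 < σ) {κ : ℝ} (h0 : 0 < κ)
    (h1 : κ < 1) :
    (∫ β : ℝ, jointF a b τ s σ y β κ) = gAux a b τ s σ y κ ∧
    (∫ β : ℝ, β * jointF a b τ s σ y β κ) = ((1-κ)*y) * gAux a b τ s σ y κ ∧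
    (∫ β : ℝ, β^2 * jointF a b τ s σ y β κ)
      = (σ^2*(1-κ) + ((1-κ)*y)^2) * gAux a b τ s σ y κ := by
  set c : ℝ := (2*(σ^2*(1-κ)))⁻¹ with hcdef
  have hu : 0 < 1 - κ := by linarith
  have hc : 0 < c := by rw [hcdef]; positivity
  set m : ℝ := (1-κ)*y with hmdef
  set A : ℝ := (2*Real.pi*σ^2) ^ (-(1:ℝ)/2) with hAdef
  set B : ℝ := (2*Real.pi*(σ^2*(1/κ-1))) ^ (-(1:ℝ)/2) with hBdef
  set E : ℝ := Real.exp (-(κ*y^2)/(2*σ^2)) with hEdef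
  set P : ℝ := hbPdf a b τ s κ with hPdef
  have hj : ∀ β : ℝ, jointF a b τ s σ y β κ
      = (A * B * E * P) * Real.exp (-c * (β - m) ^ 2) :=
    fun β => hbAux_jointF_eq a b τ s σ y hσ h0 h1 β
  have hcs : A * B * Real.sqrt (Real.pi / c) = Real.sqrt κ / Real.sqrt (2*Real.pi*σ^2) :=
    hbAux_const_simp σ hσ h0 h1
  have h2c : (2*c)⁻¹ = σ^2*(1-κ) := by
    rw [hcdef, mul_inv, inv_inv]; ring
  refine ⟨?_, ?_, ?_⟩
  · simp only [hj]
    rw [integral_const_mul, hbAux_integral_shift_exp hc]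
    calc A * B * E * P * Real.sqrt (Real.pi / c)
        = (A * B * Real.sqrt (Real.pi / c)) * (E * P) := by ring
      _ = (Real.sqrt κ / Real.sqrt (2*Real.pi*σ^2)) * (E * P) := by rw [hcs]
      _ = gAux a b τ s σ y κ := by rw [gAux, hEdef, hPdef]; ring
  · simp only [hj]
    have hswap : ∀ β : ℝ, β * ((A * B * E * P) * Real.exp (-c * (β - m) ^ 2))
        = (A * B * E * P) * (β * Real.exp (-c * (β - m) ^ 2)) := fun β => by ring
    simp only [hswap]
    rw [integral_const_mul, hbAux_integral_shift_mul_exp hc]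
    calc A * B * E * P * (m * Real.sqrt (Real.pi / c))
        = m * ((A * B * Real.sqrt (Real.pi / c)) * (E * P)) := by ring
      _ = m * ((Real.sqrt κ / Real.sqrt (2*Real.pi*σ^2)) * (E * P)) := by rw [hcs]
      _ = ((1-κ)*y) * gAux a b τ s σ y κ := by rw [gAux, hEdef, hPdef, hmdef]; ring
  · simp only [hj]
    have hswap : ∀ β : ℝ, β^2 * ((A * B * E * P) * Real.exp (-c * (β - m) ^ 2))
        = (A * B * E * P) * (β^2 * Real.exp (-c * (β - m) ^ 2)) := fun β => by ring
    simp only [hswap]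
    rw [integral_const_mul, hbAux_integral_shift_sq_mul_exp hc, h2c]
    calc A * B * E * P * ((σ^2*(1-κ) + m^2) * Real.sqrt (Real.pi / c))
        = (σ^2*(1-κ) + m^2) * ((A * B * Real.sqrt (Real.pi / c)) * (E * P)) := by ring
      _ = (σ^2*(1-κ) + m^2) * ((Real.sqrt κ / Real.sqrt (2*Real.pi*σ^2)) * (E * P)) := by
          rw [hcs]
      _ = (σ^2*(1-κ) + ((1-κ)*y)^2) * gAux a b τ s σ y κ := by
          rw [gAux, hEdef, hPdef, hmdef]; ring

section Integrability

lemma hbAux_setIntegral_Ioo_pos {f : ℝ → ℝ} (hf : IntegrableOn f (Ioo 0 1))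
    (hpos : ∀ x ∈ Ioo (0:ℝ) 1, 0 < f x) : 0 < ∫ x in Ioo (0:ℝ) 1, f x := by
  rw [← integral_Ioc_eq_integral_Ioo, ← intervalIntegral.integral_of_le zero_le_one]
  exact intervalIntegral.intervalIntegral_pos_of_pos_on
    ((intervalIntegrable_iff_integrableOn_Ioo_of_le zero_le_one).mpr hf) hpos zero_lt_one

lemma hbAux_rpow_bound {x r : ℝ} (hx : 1/2 ≤ x) (hx1 : x ≤ 1) :
    x ^ r ≤ (1/2:ℝ) ^ r + 1 := by
  rcases le_or_gt 0 r with h|h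
  · have h1 := Real.rpow_le_one (by linarith) hx1 h
    have h0 : (0:ℝ) ≤ (1/2:ℝ)^r := Real.rpow_nonneg (by norm_num) r
    linarith
  · have h1 := Real.rpow_le_rpow_of_nonpos (by norm_num : (0:ℝ) < 1/2) hx h.le
    linarith

lemma hbAux_meas_hbKer (a b τ s : ℝ) : Measurable (hbKer a b τ s) := by
  unfold hbKer
  fun_prop

lemma hbAux_meas_gAux (a b τ s σ y : ℝ) : Measurable (gAux a b τ s σ y) := by
  unfold gAux hbPdf hbKer
  fun_prop

lemma hbAux_int_beta_ker {a b : ℝ} (ha : 0 < a) (hb : 0 < b) :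
    IntegrableOn (fun κ : ℝ => κ^(a-1)*(1-κ)^(b-1)) (Ioo 0 1) := by
  rw [← integrableOn_Ioc_iff_integrableOn_Ioo]
  have hsplit : Ioc (0:ℝ) 1 = Ioc 0 (1/2) ∪ Ioc (1/2) 1 :=
    (Ioc_union_Ioc_eq_Ioc (by norm_num) (by norm_num)).symm
  rw [hsplit, integrableOn_union]
  have hmeas : Measurable (fun κ : ℝ => κ^(a-1)*(1-κ)^(b-1)) := by fun_prop
  constructor
  · have base : IntegrableOn (fun κ:ℝ => κ^(a-1)) (Ioc 0 (1/2)) := by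
      rw [← intervalIntegrable_iff_integrableOn_Ioc_of_le (by norm_num : (0:ℝ) ≤ 1/2)]
      exact intervalIntegral.intervalIntegrable_rpow' (by linarith)
    apply Integrable.mono' (base.const_mul ((1/2:ℝ)^(b-1) + 1))
      hmeas.aestronglyMeasurable
    filter_upwards [ae_restrict_mem measurableSet_Ioc] with κ hκ
    obtain ⟨hκ0, hκ2⟩ := hκ
    have h1κ : 1/2 ≤ 1 - κ := by linarith
    have h1κ' : 1 - κ ≤ 1 := by linarith
    have hbnd := hbAux_rpow_bound (r := b-1) h1κ h1κ'
    have hκnn : (0:ℝ) ≤ κ^(a-1) := Real.rpow_nonneg hκ0.le _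
    have h1nn : (0:ℝ) ≤ (1-κ)^(b-1) := Real.rpow_nonneg (by linarith) _
    rw [Real.norm_eq_abs, abs_of_nonneg (mul_nonneg hκnn h1nn)]
    calc κ^(a-1)*(1-κ)^(b-1) ≤ κ^(a-1) * ((1/2:ℝ)^(b-1) + 1) :=
          mul_le_mul_of_nonneg_left hbnd hκnn
      _ = ((1/2:ℝ)^(b-1) + 1) * κ^(a-1) := by ring
  · have base : IntegrableOn (fun κ:ℝ => (1-κ)^(b-1)) (Ioc (1/2) 1) := by
      have h := (intervalIntegral.intervalIntegrable_rpow'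
        (show (-1:ℝ) < b-1 by linarith) (a := 0) (b := 1/2)).comp_sub_left 1
      norm_num at h
      rw [← intervalIntegrable_iff_integrableOn_Ioc_of_le (by norm_num : (1/2:ℝ) ≤ 1)]
      exact h.symm
    apply Integrable.mono' (base.const_mul ((1/2:ℝ)^(a-1) + 1))
      hmeas.aestronglyMeasurable
    filter_upwards [ae_restrict_mem measurableSet_Ioc] with κ hκ
    obtain ⟨hκ0, hκ2⟩ := hκ
    have hκ0' : (0:ℝ) < κ := by linarith
    have hbnd := hbAux_rpow_bound (r := a-1) hκ0.le hκ2
    have hκnn : (0:ℝ) ≤ (1-κ)^(b-1) := Real.rpow_nonneg (by linarith) _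
    have hκnn2 : (0:ℝ) ≤ κ^(a-1) := Real.rpow_nonneg hκ0'.le _
    rw [Real.norm_eq_abs, abs_of_nonneg (mul_nonneg hκnn2 hκnn)]
    exact mul_le_mul_of_nonneg_right hbnd hκnn

lemma hbAux_denom_pos {τ κ : ℝ} (hτ : 0 < τ) (h0 : 0 < κ) (h1 : κ < 1) :
    0 < 1 / τ ^ 2 + (1 - 1 / τ ^ 2) * κ := by
  have h : 1 / τ ^ 2 + (1 - 1 / τ ^ 2) * κ = (1-κ)/τ^2 + κ := by ring
  have hτ2 : 0 < τ^2 := by positivity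
  have h2 : 0 < (1-κ)/τ^2 := div_pos (by linarith) hτ2
  rw [h]; linarith

lemma hbAux_denom_inv_le {τ κ : ℝ} (hτ : 0 < τ) (h0 : 0 < κ) (h1 : κ < 1) :
    (1 / τ ^ 2 + (1 - 1 / τ ^ 2) * κ)⁻¹ ≤ max (τ^2) 1 := by
  have hτ2 : 0 < τ^2 := by positivity
  have hmax : 0 < max (τ^2) 1 := lt_max_of_lt_right one_pos
  have hd : (max (τ^2) 1)⁻¹ ≤ 1 / τ ^ 2 + (1 - 1 / τ ^ 2) * κ := by
    rcases le_total (τ^2) 1 with h|h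
    · rw [max_eq_right h]
      have h2 : (1-κ) ≤ (1-κ)/τ^2 := by
        rw [le_div_iff₀ hτ2]; nlinarith
      have h3 : 1 / τ ^ 2 + (1 - 1 / τ ^ 2) * κ = (1-κ)/τ^2 + κ := by ring
      rw [h3]; simp; linarith
    · rw [max_eq_left h, inv_eq_one_div, div_le_iff₀ hτ2]
      have h3 : (1 / τ ^ 2 + (1 - 1 / τ ^ 2) * κ) * τ^2 = (1-κ) + κ*τ^2 := by
        field_simp; ring
      rw [h3]; nlinarith
  calc (1 / τ ^ 2 + (1 - 1 / τ ^ 2) * κ)⁻¹ ≤ ((max (τ^2) 1)⁻¹)⁻¹ := by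
        apply inv_anti₀ (by positivity) hd
    _ = max (τ^2) 1 := inv_inv _

lemma hbAux_hbKer_pos {a b τ s κ : ℝ} (hτ : 0 < τ) (h0 : 0 < κ) (h1 : κ < 1) :
    0 < hbKer a b τ s κ := by
  unfold hbKer
  have := hbAux_denom_pos hτ h0 h1
  have h2 : (0:ℝ) < 1 - κ := by linarith
  positivity

lemma hbAux_int_hbKer {a b τ s : ℝ} (ha : 0 < a) (hb : 0 < b) (hτ : 0 < τ) :
    IntegrableOn (hbKer a b τ s) (Ioo 0 1) := by
  apply Integrable.mono' (((hbAux_int_beta_ker ha hb).const_mul (max (τ^2) 1 * Real.exp |s|)))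
    (hbAux_meas_hbKer a b τ s).aestronglyMeasurable
  filter_upwards [ae_restrict_mem measurableSet_Ioo] with κ hκ
  obtain ⟨h0, h1⟩ := hκ
  have hdp := hbAux_denom_pos hτ h0 h1
  have hdi := hbAux_denom_inv_le hτ h0 h1
  have hexp : Real.exp (-(s*κ)) ≤ Real.exp |s| := by
    apply Real.exp_le_exp.mpr
    calc -(s*κ) ≤ |s*κ| := neg_le_abs _
      _ = |s| * |κ| := abs_mul s κ
      _ ≤ |s| * 1 := by
          apply mul_le_mul_of_nonneg_left _ (abs_nonneg s)
          rw [abs_of_nonneg h0.le]; linarith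
      _ = |s| := mul_one _
  have hker := hbAux_hbKer_pos (a := a) (b := b) (s := s) hτ h0 h1
  rw [Real.norm_eq_abs, abs_of_nonneg hker.le]
  have hknn : (0:ℝ) ≤ κ^(a-1) := Real.rpow_nonneg h0.le _
  have h1nn : (0:ℝ) ≤ (1-κ)^(b-1) := Real.rpow_nonneg (by linarith) _
  show κ ^ (a - 1) * (1 - κ) ^ (b - 1) * (1 / τ ^ 2 + (1 - 1 / τ ^ 2) * κ)⁻¹
        * Real.exp (-(s * κ)) ≤ _
  calc κ ^ (a - 1) * (1 - κ) ^ (b - 1) * (1 / τ ^ 2 + (1 - 1 / τ ^ 2) * κ)⁻¹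
        * Real.exp (-(s * κ))
      ≤ κ ^ (a - 1) * (1 - κ) ^ (b - 1) * max (τ^2) 1 * Real.exp |s| := by
        have hs1 : κ ^ (a - 1) * (1 - κ) ^ (b - 1) * (1 / τ ^ 2 + (1 - 1 / τ ^ 2) * κ)⁻¹
            ≤ κ ^ (a - 1) * (1 - κ) ^ (b - 1) * max (τ^2) 1 :=
          mul_le_mul_of_nonneg_left hdi (mul_nonneg hknn h1nn)
        exact mul_le_mul hs1 hexp (Real.exp_pos _).le
          (mul_nonneg (mul_nonneg hknn h1nn) (le_max_of_le_right zero_le_one))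
    _ = max (τ^2) 1 * Real.exp |s| * (κ^(a-1)*(1-κ)^(b-1)) := by ring

lemma hbAux_hbC_pos {a b τ s : ℝ} (ha : 0 < a) (hb : 0 < b) (hτ : 0 < τ) :
    0 < hbC a b τ s :=
  hbAux_setIntegral_Ioo_pos (hbAux_int_hbKer ha hb hτ)
    (fun κ hκ => hbAux_hbKer_pos hτ hκ.1 hκ.2)

lemma hbAux_gAux_pos {a b τ s σ y κ : ℝ} (ha : 0 < a) (hb : 0 < b) (hτ : 0 < τ)
    (hσ : 0 < σ) (h0 : 0 < κ) (h1 : κ < 1) : 0 < gAux a b τ s σ y κ := by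
  unfold gAux hbPdf
  have hC := hbAux_hbC_pos (a := a) (b := b) (τ := τ) (s := s) ha hb hτ
  have hK := hbAux_hbKer_pos (a := a) (b := b) (τ := τ) (s := s) hτ h0 h1
  positivity

lemma hbAux_int_gAux {a b τ s σ y : ℝ} (ha : 0 < a) (hb : 0 < b) (hτ : 0 < τ) (hσ : 0 < σ) :
    IntegrableOn (gAux a b τ s σ y) (Ioo 0 1) := by
  apply Integrable.mono' ((hbAux_int_hbKer (s := s) ha hb hτ).const_mul
      (|(hbC a b τ s)⁻¹| * (Real.sqrt (2*Real.pi*σ^2))⁻¹))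
    (hbAux_meas_gAux a b τ s σ y).aestronglyMeasurable
  filter_upwards [ae_restrict_mem measurableSet_Ioo] with κ hκ
  obtain ⟨h0, h1⟩ := hκ
  have hker := hbAux_hbKer_pos (a := a) (b := b) (s := s) hτ h0 h1
  have hsP : 0 < Real.sqrt (2*Real.pi*σ^2) := Real.sqrt_pos.mpr (by positivity)
  have hsq : Real.sqrt κ ≤ 1 := by
    have h := Real.sqrt_le_sqrt h1.le
    simpa using h
  have hdivle : Real.sqrt κ / Real.sqrt (2*Real.pi*σ^2) ≤ (Real.sqrt (2*Real.pi*σ^2))⁻¹ := by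
    rw [div_eq_mul_inv]
    calc Real.sqrt κ * (Real.sqrt (2*Real.pi*σ^2))⁻¹
        ≤ 1 * (Real.sqrt (2*Real.pi*σ^2))⁻¹ :=
          mul_le_mul_of_nonneg_right hsq (inv_nonneg.mpr hsP.le)
      _ = (Real.sqrt (2*Real.pi*σ^2))⁻¹ := one_mul _
  have hexp : Real.exp (-(κ*y^2)/(2*σ^2)) ≤ 1 := by
    apply Real.exp_le_one_iff.mpr
    have h : (0:ℝ) ≤ (κ*y^2)/(2*σ^2) := by positivity
    have h2 : -(κ*y^2)/(2*σ^2) = -((κ*y^2)/(2*σ^2)) := by ring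
    rw [h2]; linarith
  have habs : ‖gAux a b τ s σ y κ‖
      = |(hbC a b τ s)⁻¹| * hbKer a b τ s κ
        * (Real.sqrt κ / Real.sqrt (2*Real.pi*σ^2)) * Real.exp (-(κ*y^2)/(2*σ^2)) := by
    rw [Real.norm_eq_abs]
    unfold gAux hbPdf
    rw [abs_mul, abs_mul, abs_mul, abs_of_nonneg hker.le,
      abs_of_nonneg (div_nonneg (Real.sqrt_nonneg _) hsP.le),
      abs_of_nonneg (Real.exp_pos _).le]
  rw [habs]
  have hnn : (0:ℝ) ≤ |(hbC a b τ s)⁻¹| * hbKer a b τ s κ :=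
    mul_nonneg (abs_nonneg _) hker.le
  calc |(hbC a b τ s)⁻¹| * hbKer a b τ s κ
        * (Real.sqrt κ / Real.sqrt (2*Real.pi*σ^2)) * Real.exp (-(κ*y^2)/(2*σ^2))
      ≤ |(hbC a b τ s)⁻¹| * hbKer a b τ s κ * (Real.sqrt (2*Real.pi*σ^2))⁻¹ * 1 :=
        mul_le_mul (mul_le_mul_of_nonneg_left hdivle hnn) hexp (Real.exp_pos _).le
          (mul_nonneg hnn (inv_nonneg.mpr hsP.le))
    _ = |(hbC a b τ s)⁻¹| * (Real.sqrt (2*Real.pi*σ^2))⁻¹ * hbKer a b τ s κ := by ring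

end Integrability

theorem hb_posterior_variance_decomposition (a b τ s σ y : ℝ) (ha : 0 < a) (hb : 0 < b)
    (hτ : 0 < τ) (hσ : 0 < σ)
    (D Eb Eb2 Ek Ek2 : ℝ)
    (hD : D = ∫ κ in Set.Ioo (0 : ℝ) 1, ∫ β : ℝ, jointF a b τ s σ y β κ)
    (hEb : Eb = (∫ κ in Set.Ioo (0 : ℝ) 1, ∫ β : ℝ, β * jointF a b τ s σ y β κ) / D)
    (hEb2 : Eb2 = (∫ κ in Set.Ioo (0 : ℝ) 1, ∫ β : ℝ, β ^ 2 * jointF a b τ s σ y β κ) / D)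
    (hEk : Ek = (∫ κ in Set.Ioo (0 : ℝ) 1, ∫ β : ℝ, κ * jointF a b τ s σ y β κ) / D)
    (hEk2 : Ek2 = (∫ κ in Set.Ioo (0 : ℝ) 1, ∫ β : ℝ, κ ^ 2 * jointF a b τ s σ y β κ) / D) :
    Eb2 - Eb ^ 2 = σ ^ 2 * (1 - Ek) + y ^ 2 * (Ek2 - Ek ^ 2) := by
  have hGm : Measurable (gAux a b τ s σ y) := hbAux_meas_gAux a b τ s σ y
  have hG : IntegrableOn (gAux a b τ s σ y) (Ioo 0 1) := hbAux_int_gAux ha hb hτ hσ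
  have hG1 : IntegrableOn (fun κ => κ * gAux a b τ s σ y κ) (Ioo 0 1) := by
    apply Integrable.mono' hG.abs (measurable_id.mul hGm).aestronglyMeasurable
    filter_upwards [ae_restrict_mem measurableSet_Ioo] with κ hκ
    simp only [Real.norm_eq_abs, Pi.mul_apply, id_eq, abs_mul]
    calc |κ| * |gAux a b τ s σ y κ| ≤ 1 * |gAux a b τ s σ y κ| := by
          apply mul_le_mul_of_nonneg_right _ (abs_nonneg _)
          rw [abs_of_nonneg hκ.1.le]; linarith [hκ.2]
      _ = |gAux a b τ s σ y κ| := one_mul _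
  have hG2 : IntegrableOn (fun κ => κ^2 * gAux a b τ s σ y κ) (Ioo 0 1) := by
    apply Integrable.mono' hG.abs ((measurable_id.pow_const 2).mul hGm).aestronglyMeasurable
    filter_upwards [ae_restrict_mem measurableSet_Ioo] with κ hκ
    simp only [Real.norm_eq_abs, Pi.mul_apply, id_eq, abs_mul]
    calc |κ^2| * |gAux a b τ s σ y κ| ≤ 1 * |gAux a b τ s σ y κ| := by
          apply mul_le_mul_of_nonneg_right _ (abs_nonneg _)
          rw [abs_of_nonneg (sq_nonneg κ)]
          nlinarith [hκ.1, hκ.2]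
      _ = |gAux a b τ s σ y κ| := one_mul _
  have hinner := fun (κ : ℝ) (hκ : κ ∈ Ioo (0:ℝ) 1) =>
    hbAux_inner_integrals a b τ s σ y hσ hκ.1 hκ.2
  have hK0pos : 0 < ∫ κ in Ioo (0:ℝ) 1, gAux a b τ s σ y κ :=
    hbAux_setIntegral_Ioo_pos hG (fun κ hκ => hbAux_gAux_pos ha hb hτ hσ hκ.1 hκ.2)
  have hD' : D = ∫ κ in Ioo (0:ℝ) 1, gAux a b τ s σ y κ := by
    rw [hD]
    exact setIntegral_congr_fun measurableSet_Ioo (fun κ hκ => (hinner κ hκ).1)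
  have hnumEk : (∫ κ in Ioo (0:ℝ) 1, ∫ β : ℝ, κ * jointF a b τ s σ y β κ)
      = ∫ κ in Ioo (0:ℝ) 1, κ * gAux a b τ s σ y κ := by
    apply setIntegral_congr_fun measurableSet_Ioo
    intro κ hκ
    dsimp only
    rw [integral_const_mul, (hinner κ hκ).1]
  have hnumEk2 : (∫ κ in Ioo (0:ℝ) 1, ∫ β : ℝ, κ^2 * jointF a b τ s σ y β κ)
      = ∫ κ in Ioo (0:ℝ) 1, κ^2 * gAux a b τ s σ y κ := by
    apply setIntegral_congr_fun measurableSet_Ioo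
    intro κ hκ
    dsimp only
    rw [integral_const_mul, (hinner κ hκ).1]
  have hnumEb : (∫ κ in Ioo (0:ℝ) 1, ∫ β : ℝ, β * jointF a b τ s σ y β κ)
      = y * (∫ κ in Ioo (0:ℝ) 1, gAux a b τ s σ y κ)
        - y * (∫ κ in Ioo (0:ℝ) 1, κ * gAux a b τ s σ y κ) := by
    rw [setIntegral_congr_fun measurableSet_Ioo (fun κ hκ => (hinner κ hκ).2.1)]
    have hpt : ∀ κ : ℝ, ((1-κ)*y) * gAux a b τ s σ y κ
        = y * gAux a b τ s σ y κ - y * (κ * gAux a b τ s σ y κ) := fun κ => by ring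
    simp only [hpt]
    rw [integral_sub (hG.const_mul y) (hG1.const_mul y), integral_const_mul, integral_const_mul]
  have hnumEb2 : (∫ κ in Ioo (0:ℝ) 1, ∫ β : ℝ, β^2 * jointF a b τ s σ y β κ)
      = (σ^2+y^2) * (∫ κ in Ioo (0:ℝ) 1, gAux a b τ s σ y κ)
        - (σ^2+2*y^2) * (∫ κ in Ioo (0:ℝ) 1, κ * gAux a b τ s σ y κ)
        + y^2 * (∫ κ in Ioo (0:ℝ) 1, κ^2 * gAux a b τ s σ y κ) := by
    rw [setIntegral_congr_fun measurableSet_Ioo (fun κ hκ => (hinner κ hκ).2.2)]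
    have hpt : ∀ κ : ℝ, (σ^2*(1-κ) + ((1-κ)*y)^2) * gAux a b τ s σ y κ
        = ((σ^2+y^2) * gAux a b τ s σ y κ - (σ^2+2*y^2) * (κ * gAux a b τ s σ y κ))
          + y^2 * (κ^2 * gAux a b τ s σ y κ) := fun κ => by ring
    simp only [hpt]
    have hf : Integrable (fun κ : ℝ => (σ^2+y^2) * gAux a b τ s σ y κ
        - (σ^2+2*y^2) * (κ * gAux a b τ s σ y κ)) (volume.restrict (Ioo 0 1)) := by
      exact (hG.const_mul _).sub (hG1.const_mul _)
    rw [integral_add hf (hG2.const_mul (y^2)),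
      integral_sub (hG.const_mul _) (hG1.const_mul _),
      integral_const_mul, integral_const_mul, integral_const_mul]
  rw [hEb, hEb2, hEk, hEk2, hnumEb, hnumEb2, hnumEk, hnumEk2, hD']
  have hK0ne : (∫ κ in Ioo (0:ℝ) 1, gAux a b τ s σ y κ) ≠ 0 := ne_of_gt hK0pos
  field_simp
  ring
end
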